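/- Fix β ∈ ℝ and N ∈ ℕ, and let Ω(x₁,…,x_N) = ∏_{1 ≤ j < k ≤ N} (x_j − x_k)^β on the open region x_N < x_{N−1} < ⋯ < x₁ in ℝ^N. Then Ω satisfies (−Σ_j ∂²/∂x_j² + β(β−1) Σ_{j ≠ k} 1/(x_j − x_k)²) Ω = 0, i.e. Ω is a zero-energy eigenfunction of the rational Calogero Hamiltonian. -/

import Mathlib

open Real Finset

namespace CalAux

variable {N : ℕ}

def Pset (N : ℕ) : Finset (Fin N × Fin N) := univ.filter (fun p => p.1 < p.2)

def U (N : ℕ) : Set (Fin N → ℝ) := {y | ∀ j k : Fin N, j < k → y k < y j}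

lemma isOpen_U : IsOpen (U N) := by
  have : U N = ⋂ p : Fin N × Fin N, {y : Fin N → ℝ | p.1 < p.2 → y p.2 < y p.1} := by
    ext y
    simp only [U, Set.mem_iInter, Set.mem_setOf_eq]
    exact ⟨fun h p => h p.1 p.2, fun h j k hjk => h (j, k) hjk⟩
  rw [this]
  refine isOpen_iInter_of_finite fun p => ?_
  by_cases hp : p.1 < p.2
  · simp only [hp, forall_true_left]
    exact isOpen_lt (continuous_apply p.2) (continuous_apply p.1)
  · have : {y : Fin N → ℝ | p.1 < p.2 → y p.2 < y p.1} = Set.univ := by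
      ext y; simp [hp]
    rw [this]; exact isOpen_univ

lemma U_pos {y : Fin N → ℝ} (hy : y ∈ U N) {p : Fin N × Fin N} (hp : p ∈ Pset N) :
    0 < y p.1 - y p.2 := by
  simp only [Pset, mem_filter] at hp
  have := hy p.1 p.2 hp.2
  linarith

lemma U_ne {y : Fin N → ℝ} (hy : y ∈ U N) {j k : Fin N} (h : j ≠ k) :
    y j - y k ≠ 0 := by
  rcases lt_or_gt_of_ne h with h' | h'
  · have := hy j k h'; linarith
  · have := hy k j h'; linarith

end CalAux

namespace CalAux

variable {N : ℕ}

def Lp (p : Fin N × Fin N) : (Fin N → ℝ) →L[ℝ] ℝ :=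
  (ContinuousLinearMap.proj p.1 : (Fin N → ℝ) →L[ℝ] ℝ) -
    (ContinuousLinearMap.proj p.2 : (Fin N → ℝ) →L[ℝ] ℝ)

lemma Lp_apply (p : Fin N × Fin N) (v : Fin N → ℝ) : Lp p v = v p.1 - v p.2 := rfl

lemma hasFDerivAt_sub_proj (p : Fin N × Fin N) (y : Fin N → ℝ) :
    HasFDerivAt (fun y : Fin N → ℝ => y p.1 - y p.2) (Lp p) y :=
  ((ContinuousLinearMap.proj p.1 : (Fin N → ℝ) →L[ℝ] ℝ).hasFDerivAt).sub
    ((ContinuousLinearMap.proj p.2 : (Fin N → ℝ) →L[ℝ] ℝ).hasFDerivAt)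

noncomputable def Om (β : ℝ) (N : ℕ) : (Fin N → ℝ) → ℝ :=
  fun y => ∏ p ∈ Pset N, (y p.1 - y p.2) ^ β

noncomputable def DOm (β : ℝ) (y : Fin N → ℝ) : (Fin N → ℝ) →L[ℝ] ℝ :=
  ∑ p ∈ Pset N, (∏ q ∈ (Pset N).erase p, (y q.1 - y q.2) ^ β) •
    ((β * (y p.1 - y p.2) ^ (β - 1)) • Lp p)

lemma hasFDerivAt_Om (β : ℝ) {y : Fin N → ℝ} (hy : y ∈ U N) :
    HasFDerivAt (Om β N) (DOm β y) y :=
  HasFDerivAt.finset_prod fun p hp =>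
    (hasFDerivAt_sub_proj p y).rpow_const (Or.inl (ne_of_gt (U_pos hy hp)))

end CalAux

namespace CalAux

variable {N : ℕ}

lemma key_sum (y : Fin N → ℝ) (j : Fin N) (A : ℝ) :
    ∑ p ∈ Pset N, (A * (y p.1 - y p.2)⁻¹) *
      ((Pi.single j 1 : Fin N → ℝ) p.1 - (Pi.single j 1 : Fin N → ℝ) p.2)
      = ∑ k ∈ univ.erase j, A * (y j - y k)⁻¹ := by
  have h1 : ∀ p ∈ Pset N,
      (A * (y p.1 - y p.2)⁻¹) *
        ((Pi.single j 1 : Fin N → ℝ) p.1 - (Pi.single j 1 : Fin N → ℝ) p.2)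
        = (if p.1 = j then A * (y p.1 - y p.2)⁻¹ else 0)
          - (if p.2 = j then A * (y p.1 - y p.2)⁻¹ else 0) := by
    intro p hp
    have hne : p.1 ≠ p.2 := by
      simp only [Pset, mem_filter] at hp; exact ne_of_lt hp.2
    by_cases h1 : p.1 = j <;> by_cases h2 : p.2 = j
    · exact absurd (h1.trans h2.symm) hne
    · simp [Pi.single_apply, h1, h2]
    · simp [Pi.single_apply, h1, h2]
    · simp [Pi.single_apply, h1, h2]
  rw [Finset.sum_congr rfl h1, Finset.sum_sub_distrib, ← Finset.sum_filter, ← Finset.sum_filter]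
  have h2 : (Pset N).filter (fun p => p.1 = j)
      = (univ.filter (fun k => j < k)).image (fun k => (j, k)) := by
    ext p
    simp only [Pset, mem_filter, mem_univ, true_and, Finset.mem_image]
    constructor
    · rintro ⟨hlt, rfl⟩; exact ⟨p.2, hlt, rfl⟩
    · rintro ⟨k, hk, rfl⟩; exact ⟨hk, rfl⟩
  have h3 : (Pset N).filter (fun p => p.2 = j)
      = (univ.filter (fun k => k < j)).image (fun k => (k, j)) := by
    ext p
    simp only [Pset, mem_filter, mem_univ, true_and, Finset.mem_image]
    constructor
    · rintro ⟨hlt, rfl⟩; exact ⟨p.1, hlt, rfl⟩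
    · rintro ⟨k, hk, rfl⟩; exact ⟨hk, rfl⟩
  rw [h2, h3, Finset.sum_image (by intro a _ b _ h; exact (Prod.mk.injEq _ _ _ _ ▸ h).2),
    Finset.sum_image (by intro a _ b _ h; exact (Prod.mk.injEq _ _ _ _ ▸ h).1)]
  have e1 : (univ.erase j).filter (fun k => j < k) = univ.filter (fun k => j < k) := by
    ext k
    simp only [mem_filter, Finset.mem_erase, mem_univ, true_and, and_true]
    exact ⟨fun h => h.2, fun h => ⟨ne_of_gt h, h⟩⟩
  have e2 : (univ.erase j).filter (fun k => ¬ j < k) = univ.filter (fun k => k < j) := by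
    ext k
    simp only [mem_filter, Finset.mem_erase, mem_univ, true_and, and_true]
    constructor
    · rintro ⟨hne, hnlt⟩; exact lt_of_le_of_ne (le_of_not_gt hnlt) hne
    · intro h; exact ⟨ne_of_lt h, not_lt_of_gt h⟩
  rw [← Finset.sum_filter_add_sum_filter_not (univ.erase j) (fun k => j < k), e1, e2]
  have : ∀ k ∈ univ.filter (fun k => k < j), A * (y j - y k)⁻¹ = -(A * (y k - y j)⁻¹) := by
    intro k _
    rw [show y j - y k = -(y k - y j) by ring, inv_neg]; ring
  rw [Finset.sum_congr rfl this, Finset.sum_neg_distrib]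
  ring

end CalAux

namespace CalAux

variable {N : ℕ}

lemma DOm_apply (β : ℝ) {y : Fin N → ℝ} (hy : y ∈ U N) (j : Fin N) :
    DOm β y (Pi.single j 1)
      = ∑ k ∈ univ.erase j, (β * Om β N y) * (y j - y k)⁻¹ := by
  have happ : DOm β y (Pi.single j 1)
      = ∑ p ∈ Pset N, (∏ q ∈ (Pset N).erase p, (y q.1 - y q.2) ^ β) *
          ((β * (y p.1 - y p.2) ^ (β - 1)) *
            ((Pi.single j 1 : Fin N → ℝ) p.1 - (Pi.single j 1 : Fin N → ℝ) p.2)) := by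
    simp [DOm, ContinuousLinearMap.sum_apply, Lp_apply, smul_eq_mul]
  rw [happ, ← key_sum y j (β * Om β N y)]
  refine Finset.sum_congr rfl fun p hp => ?_
  have hu : 0 < y p.1 - y p.2 := U_pos hy hp
  have h1 : (y p.1 - y p.2) ^ (β - 1) = (y p.1 - y p.2) ^ β * (y p.1 - y p.2)⁻¹ := by
    rw [Real.rpow_sub hu, Real.rpow_one, div_eq_mul_inv]
  have h2 : (y p.1 - y p.2) ^ β * ∏ q ∈ (Pset N).erase p, (y q.1 - y q.2) ^ β = Om β N y :=
    Finset.mul_prod_erase (Pset N) (fun q => (y q.1 - y q.2) ^ β) hp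
  rw [h1, ← h2]
  ring

end CalAux

namespace CalAux

variable {N : ℕ}

noncomputable def Sj (j : Fin N) : (Fin N → ℝ) → ℝ :=
  fun y => ∑ k ∈ univ.erase j, (y j - y k)⁻¹

noncomputable def DSj (j : Fin N) (y : Fin N → ℝ) : (Fin N → ℝ) →L[ℝ] ℝ :=
  ∑ k ∈ univ.erase j, (-(((y j - y k) : ℝ) ^ 2)⁻¹) • Lp (j, k)

lemma hasFDerivAt_Sj {y : Fin N → ℝ} (hy : y ∈ U N) (j : Fin N) :
    HasFDerivAt (Sj j) (DSj j y) y := by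
  refine HasFDerivAt.fun_sum fun k hk => ?_
  have hne : y j - y k ≠ 0 := U_ne hy (Finset.ne_of_mem_erase hk).symm
  exact (hasDerivAt_inv hne).comp_hasFDerivAt y (hasFDerivAt_sub_proj (j, k) y)

lemma DSj_apply (j : Fin N) (y : Fin N → ℝ) :
    DSj j y (Pi.single j 1) = -∑ k ∈ univ.erase j, (((y j - y k) : ℝ) ^ 2)⁻¹ := by
  rw [DSj, ContinuousLinearMap.sum_apply, ← Finset.sum_neg_distrib]
  refine Finset.sum_congr rfl fun k hk => ?_
  have hkj : k ≠ j := Finset.ne_of_mem_erase hk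
  rw [ContinuousLinearMap.smul_apply, Lp_apply]
  simp [Pi.single_apply, hkj]

noncomputable def Phi (β : ℝ) (j : Fin N) : (Fin N → ℝ) → ℝ :=
  fun y => (β * Om β N y) * Sj j y

lemma hasFDerivAt_Phi (β : ℝ) (j : Fin N) {y : Fin N → ℝ} (hy : y ∈ U N) :
    HasFDerivAt (Phi β j)
      ((β * Om β N y) • DSj j y + Sj j y • (β • DOm β y)) y :=
  ((hasFDerivAt_Om β hy).const_mul β).mul (hasFDerivAt_Sj hy j)

lemma fderiv_dir_eq_Phi (β : ℝ) (j : Fin N) {y : Fin N → ℝ} (hy : y ∈ U N) :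
    fderiv ℝ (Om β N) y (Pi.single j 1) = Phi β j y := by
  rw [(hasFDerivAt_Om β hy).fderiv, DOm_apply β hy j, Phi, Sj, Finset.mul_sum]

end CalAux

namespace CalAux

variable {N : ℕ}

def T3 (N : ℕ) : Finset (Fin N × Fin N × Fin N) :=
  univ.filter (fun t => t.2.1 ≠ t.1 ∧ t.2.2 ≠ t.1 ∧ t.2.2 ≠ t.2.1)

def rot (t : Fin N × Fin N × Fin N) : Fin N × Fin N × Fin N := (t.2.1, t.2.2, t.1)

lemma rot_mem {t : Fin N × Fin N × Fin N} (ht : t ∈ T3 N) : rot t ∈ T3 N := by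
  simp only [T3, mem_filter, mem_univ, true_and, rot] at *
  exact ⟨ht.2.2, ht.1.symm, ht.2.1.symm⟩

lemma rot_rot_rot (t : Fin N × Fin N × Fin N) : rot (rot (rot t)) = t := rfl

lemma sum_rot (g : Fin N × Fin N × Fin N → ℝ) :
    ∑ t ∈ T3 N, g t = ∑ t ∈ T3 N, g (rot t) := by
  refine Finset.sum_nbij' (fun t => rot (rot t)) (fun t => rot t) ?_ ?_ ?_ ?_ ?_
  · intro t ht; exact rot_mem (rot_mem ht)
  · intro t ht; exact rot_mem ht
  · intro t _; rfl
  · intro t _; rfl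
  · intro t _; rfl

lemma triple_sum_zero (x : Fin N → ℝ)
    (hne : ∀ j k : Fin N, j ≠ k → x j - x k ≠ 0) :
    ∑ t ∈ T3 N, (x t.1 - x t.2.1)⁻¹ * (x t.1 - x t.2.2)⁻¹ = 0 := by
  set g : Fin N × Fin N × Fin N → ℝ :=
    fun t => (x t.1 - x t.2.1)⁻¹ * (x t.1 - x t.2.2)⁻¹ with hg
  have h1 : ∑ t ∈ T3 N, g t = ∑ t ∈ T3 N, g (rot t) := sum_rot g
  have h2 : ∑ t ∈ T3 N, g t = ∑ t ∈ T3 N, g (rot (rot t)) := by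
    rw [sum_rot g, sum_rot (fun t => g (rot t))]
  have h0 : ∀ t ∈ T3 N, g t + g (rot t) + g (rot (rot t)) = 0 := by
    intro t ht
    simp only [T3, mem_filter, mem_univ, true_and] at ht
    obtain ⟨h21, h22, h221⟩ := ht
    have hab : x t.1 - x t.2.1 ≠ 0 := hne _ _ (Ne.symm h21)
    have hac : x t.1 - x t.2.2 ≠ 0 := hne _ _ (Ne.symm h22)
    have hbc : x t.2.1 - x t.2.2 ≠ 0 := hne _ _ (Ne.symm h221)
    have hba : x t.2.1 - x t.1 ≠ 0 := hne _ _ h21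
    have hca : x t.2.2 - x t.1 ≠ 0 := hne _ _ h22
    have hcb : x t.2.2 - x t.2.1 ≠ 0 := hne _ _ h221
    simp only [hg, rot]
    field_simp
    ring
  have h3 : (3 : ℝ) * ∑ t ∈ T3 N, g t = 0 := by
    have := Finset.sum_congr (rfl : T3 N = T3 N) h0
    rw [Finset.sum_add_distrib, Finset.sum_add_distrib, ← h1, ← h2] at this
    rw [Finset.sum_const, smul_zero] at this
    linarith
  linarith

end CalAux

namespace CalAux

variable {N : ℕ}

lemma nested_T3 (f : Fin N → Fin N → Fin N → ℝ) :
    ∑ j : Fin N, ∑ k ∈ univ.erase j, ∑ s ∈ (univ.erase j).erase k, f j k s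
      = ∑ t ∈ T3 N, f t.1 t.2.1 t.2.2 := by
  rw [T3, Finset.sum_filter, Fintype.sum_prod_type]
  refine Finset.sum_congr rfl fun j _ => ?_
  rw [Fintype.sum_prod_type]
  rw [show (univ.erase j : Finset (Fin N)) = univ.filter (· ≠ j) from
    (Finset.filter_ne' univ j).symm, Finset.sum_filter]
  refine Finset.sum_congr rfl fun k _ => ?_
  by_cases hkj : k = j
  · subst hkj
    simp
  · simp only [hkj, if_true, Ne, not_false_iff]
    have he : ((univ.filter (· ≠ j) : Finset (Fin N)).erase k)
        = univ.filter (fun s => s ≠ j ∧ s ≠ k) := by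
      ext s
      simp only [Finset.mem_erase, mem_filter, mem_univ, true_and]
      tauto
    rw [he, Finset.sum_filter]
    refine Finset.sum_congr rfl fun s _ => ?_
    by_cases h1 : s = j <;> by_cases h2 : s = k <;> simp [h1, h2, hkj]

lemma sum_sq_eq (x : Fin N → ℝ)
    (hne : ∀ j k : Fin N, j ≠ k → x j - x k ≠ 0) :
    ∑ j : Fin N, (∑ k ∈ univ.erase j, (x j - x k)⁻¹) ^ 2
      = ∑ j : Fin N, ∑ k ∈ univ.erase j, (((x j - x k) : ℝ) ^ 2)⁻¹ := by
  have expand : ∀ j : Fin N, (∑ k ∈ univ.erase j, (x j - x k)⁻¹) ^ 2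
      = (∑ k ∈ univ.erase j, ((x j - x k) ^ 2)⁻¹)
        + ∑ k ∈ univ.erase j, ∑ s ∈ (univ.erase j).erase k,
            (x j - x k)⁻¹ * (x j - x s)⁻¹ := by
    intro j
    rw [sq, Finset.sum_mul_sum, ← Finset.sum_add_distrib]
    refine Finset.sum_congr rfl fun k hk => ?_
    rw [← Finset.add_sum_erase _ (fun s => (x j - x k)⁻¹ * (x j - x s)⁻¹) hk,
      ← mul_inv, ← sq]
  rw [Finset.sum_congr rfl (fun j _ => expand j), Finset.sum_add_distrib,
    nested_T3 (fun j k s => (x j - x k)⁻¹ * (x j - x s)⁻¹), triple_sum_zero x hne,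
    add_zero]

end CalAux

open CalAux in
theorem rational_Calogero_zero_energy
    (β : ℝ) (N : ℕ)
    (Ω : (Fin N → ℝ) → ℝ)
    (hΩ : ∀ x, Ω x = ∏ p ∈ Finset.univ.filter (fun p : Fin N × Fin N => p.1 < p.2),
      (x p.1 - x p.2) ^ β)
    (x : Fin N → ℝ)
    (hx : ∀ j k : Fin N, j < k → x k < x j) :
    -(∑ j : Fin N,
        fderiv ℝ (fun y => fderiv ℝ Ω y (Pi.single j 1)) x (Pi.single j 1)) +
      β * (β - 1) * (∑ j : Fin N, ∑ k ∈ Finset.univ.erase j,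
        1 / (x j - x k) ^ 2) * Ω x = 0 := by
  classical
  have hΩeq : Ω = Om β N := by
    funext y; rw [hΩ y]; rfl
  subst hΩeq
  have hxU : x ∈ U N := hx
  have hne : ∀ j k : Fin N, j ≠ k → x j - x k ≠ 0 := fun j k h => U_ne hxU h
  have hsecond : ∀ j : Fin N,
      fderiv ℝ (fun y => fderiv ℝ (Om β N) y (Pi.single j 1)) x (Pi.single j 1)
        = (β * Om β N x) * (DSj j x (Pi.single j 1))
          + Sj j x * (β * (DOm β x (Pi.single j 1))) := by
    intro j
    have hev : (fun y => fderiv ℝ (Om β N) y (Pi.single j 1)) =ᶠ[nhds x] Phi β j := by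
      filter_upwards [isOpen_U.mem_nhds hxU] with y hy
      exact fderiv_dir_eq_Phi β j hy
    rw [hev.fderiv_eq, (hasFDerivAt_Phi β j hxU).fderiv]
    simp [ContinuousLinearMap.add_apply, ContinuousLinearMap.smul_apply, smul_eq_mul]
  have hD : ∀ j : Fin N, DOm β x (Pi.single j 1) = β * Om β N x * Sj j x := by
    intro j
    rw [DOm_apply β hxU j, ← Finset.mul_sum]
    rfl
  set T : ℝ := ∑ j : Fin N, ∑ k ∈ univ.erase j, (((x j - x k) : ℝ) ^ 2)⁻¹ with hT
  have hmain : ∑ j : Fin N,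
      fderiv ℝ (fun y => fderiv ℝ (Om β N) y (Pi.single j 1)) x (Pi.single j 1)
        = β * (β - 1) * T * Om β N x := by
    rw [Finset.sum_congr rfl (fun j _ => hsecond j)]
    have hterm : ∀ j : Fin N,
        (β * Om β N x) * (DSj j x (Pi.single j 1))
          + Sj j x * (β * (DOm β x (Pi.single j 1)))
        = (-(β * Om β N x)) * (∑ k ∈ univ.erase j, (((x j - x k) : ℝ) ^ 2)⁻¹)
          + (β ^ 2 * Om β N x) * (Sj j x) ^ 2 := by
      intro j
      rw [DSj_apply j x, hD j]
      ring
    rw [Finset.sum_congr rfl (fun j _ => hterm j), Finset.sum_add_distrib,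
      ← Finset.mul_sum, ← Finset.mul_sum]
    have hS2 : ∑ j : Fin N, (Sj j x) ^ 2 = T := sum_sq_eq x hne
    rw [hS2, ← hT]
    ring
  rw [hmain]
  have hT' : ∑ j : Fin N, ∑ k ∈ Finset.univ.erase j, 1 / (x j - x k) ^ 2 = T := by
    refine Finset.sum_congr rfl fun j _ => Finset.sum_congr rfl fun k _ => one_div _
  rw [hT']
  ring
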